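/- The outcome of the domain-reduction algorithm is a maximal element (with respect to the componentwise order) of the set of maximizers of f over the box {ζ ∈ Ξ⁰ : ζ ≤ b}. -/

import Mathlib

/-- `chi j` is the unit vector at `j` for `j = some i`, and the zero vector for `j = none`. -/
def chi {I : Type*} [DecidableEq I] : Option I → I → ℤ
  | none => fun _ => 0
  | some i => fun k => if k = i then 1 else 0

/-- Unit vector at coordinate `i`. -/
def unitv {I : Type*} [DecidableEq I] (i : I) : I → ℤ := fun k => if k = i then 1 else 0

/-- `f` is ordinally concave on the domain `Ξ`. -/
def OrdinallyConcave {I : Type*} [DecidableEq I] (Ξ : Set (I → ℤ)) (f : (I → ℤ) → ℝ) : Prop :=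
  ∀ ξ ∈ Ξ, ∀ ξ' ∈ Ξ, ∀ i : I, ξ' i < ξ i →
    ∃ j : Option I, (∀ k, j = some k → ξ k < ξ' k) ∧
      ξ - chi (some i) + chi j ∈ Ξ ∧ ξ' + chi (some i) - chi j ∈ Ξ ∧
      (f ξ < f (ξ - chi (some i) + chi j) ∨
        f ξ' < f (ξ' + chi (some i) - chi j) ∨
        (f (ξ' + chi (some i) - chi j) = f ξ' ∧ f (ξ - chi (some i) + chi j) = f ξ))

/-- The states reachable by the domain-reduction algorithm for maximizing `f` over the
box `{ζ ∈ Ξ : ζ ≤ b}`: starting from `0`, repeatedly add a best unit increment as long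
as this weakly increases `f`. -/
inductive Reach {I : Type*} [DecidableEq I] (Ξ : Set (I → ℤ)) (f : (I → ℤ) → ℝ)
    (b : I → ℤ) : (I → ℤ) → Prop
  | zero : Reach Ξ f b 0
  | step (ξ : I → ℤ) (i : I) :
      Reach Ξ f b ξ →
      ξ + unitv i ∈ Ξ → ξ + unitv i ≤ b →
      f ξ ≤ f (ξ + unitv i) →
      (∀ i' : I, ξ + unitv i' ∈ Ξ → ξ + unitv i' ≤ b → f (ξ + unitv i') ≤ f (ξ + unitv i)) →
      Reach Ξ f b (ξ + unitv i)

lemma chi_some_eq {I : Type*} [DecidableEq I] (i : I) : chi (some i) = unitv i := rfl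

lemma chi_none_eq {I : Type*} [DecidableEq I] : chi (none : Option I) = 0 := rfl

lemma unitv_apply {I : Type*} [DecidableEq I] (i k : I) :
    unitv i k = if k = i then 1 else 0 := rfl

lemma unitv_apply_self {I : Type*} [DecidableEq I] (i : I) : unitv i i = 1 := by
  simp [unitv_apply]

lemma unitv_apply_ne {I : Type*} [DecidableEq I] {i k : I} (h : k ≠ i) : unitv i k = 0 := by
  simp [unitv_apply, h]

lemma chi_some_apply {I : Type*} [DecidableEq I] (i k : I) :
    chi (some i) k = if k = i then 1 else 0 := rfl

lemma chi_none_apply {I : Type*} [DecidableEq I] (k : I) : chi (none : Option I) k = 0 := rfl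

/-- the outcome of the domain-reduction algorithm (a reached state at
which no further unit increment weakly increases `f`) is a maximal element, with
respect to the componentwise order, of the set of maximizers of `f` over the box
`{ζ ∈ Ξ : ζ ≤ b}`. -/
theorem domain_reduction_maximal_maximizer {I : Type*} [Fintype I] [DecidableEq I]
    (Ξ : Set (I → ℤ)) (hfin : Ξ.Finite) (h0 : (0 : I → ℤ) ∈ Ξ)
    (hpos : ∀ ξ ∈ Ξ, ∀ i, 0 ≤ ξ i)
    (f : (I → ℤ) → ℝ) (hfnn : ∀ ξ ∈ Ξ, 0 ≤ f ξ) (hf : OrdinallyConcave Ξ f)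
    (b : I → ℤ) (hb : ∀ i, 0 ≤ b i)
    (ξ : I → ℤ) (hreach : Reach Ξ f b ξ)
    (hterm : ∀ i : I, ξ + unitv i ∈ Ξ → ξ + unitv i ≤ b → f (ξ + unitv i) < f ξ) :
    ξ ∈ Ξ ∧ ξ ≤ b ∧ (∀ ζ ∈ Ξ, ζ ≤ b → f ζ ≤ f ξ) ∧
      ∀ ζ ∈ Ξ, ζ ≤ b → (∀ η ∈ Ξ, η ≤ b → f η ≤ f ζ) → ξ ≤ ζ → ζ = ξ := by
  classical
  have hboxfin : ({ζ | ζ ∈ Ξ ∧ ζ ≤ b} : Set (I → ℤ)).Finite :=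
    hfin.subset (fun ζ hζ => hζ.1)
  have hboxne : ({ζ | ζ ∈ Ξ ∧ ζ ≤ b} : Set (I → ℤ)).Nonempty :=
    ⟨0, h0, Pi.le_def.mpr fun i => hb i⟩
  obtain ⟨ζ₀, hζ₀mem, hζ₀max⟩ : ∃ a ∈ ({ζ | ζ ∈ Ξ ∧ ζ ≤ b} : Set (I → ℤ)),
      ∀ a' ∈ ({ζ | ζ ∈ Ξ ∧ ζ ≤ b} : Set (I → ℤ)), f a ≤ f a' → f a = f a' := by
    obtain ⟨a, ha, hmax⟩ := hboxfin.exists_maximalFor f _ hboxne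
    exact ⟨a, ha, fun a' ha' h => le_antisymm h (hmax ha' h)⟩
  have hopt0 : ∀ η ∈ Ξ, η ≤ b → f η ≤ f ζ₀ := by
    intro η hη hηb
    rcases le_total (f η) (f ζ₀) with h | h
    · exact h
    · exact le_of_eq (hζ₀max η ⟨hη, hηb⟩ h).symm
  -- invariant: every reached state is in the box and dominated by some optimal solution
  have key : ∀ ξ', Reach Ξ f b ξ' → ξ' ∈ Ξ ∧ ξ' ≤ b ∧
      ∃ ζ, ζ ∈ Ξ ∧ ζ ≤ b ∧ (∀ η ∈ Ξ, η ≤ b → f η ≤ f ζ) ∧ ξ' ≤ ζ := by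
    intro ξ' hr
    induction hr with
    | zero =>
      exact ⟨h0, Pi.le_def.mpr fun i => hb i, ζ₀, hζ₀mem.1, hζ₀mem.2, hopt0,
        Pi.le_def.mpr fun i => hpos ζ₀ hζ₀mem.1 i⟩
    | step ξ i hr hmem hleb hinc hmax ih =>
      obtain ⟨hξΞ, hξb, ζ, hζΞ, hζb, hζopt, hξζ⟩ := ih
      refine ⟨hmem, hleb, ?_⟩
      by_cases hcase : ξ i < ζ i
      · refine ⟨ζ, hζΞ, hζb, hζopt, Pi.le_def.mpr ?_⟩
        intro k
        rw [Pi.add_apply]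
        by_cases hk : k = i
        · subst hk; rw [unitv_apply_self]; omega
        · rw [unitv_apply_ne hk]; have := Pi.le_def.mp hξζ k; omega
      · have hζi : ζ i = ξ i := le_antisymm (not_lt.mp hcase) (Pi.le_def.mp hξζ i)
        have hlt : ζ i < (ξ + unitv i) i := by
          rw [Pi.add_apply, unitv_apply_self]; omega
        obtain ⟨j, hj, hmem1, hmem2, hor⟩ := hf (ξ + unitv i) hmem ζ hζΞ i hlt
        have hjne : j ≠ some i := by
          intro hji
          have h := hj i hji
          rw [Pi.add_apply, unitv_apply_self] at h
          omega
        have e1 : (ξ + unitv i) - chi (some i) + chi j = ξ + chi j := by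
          funext k; simp only [Pi.add_apply, Pi.sub_apply, chi_some_eq]; ring
        rw [e1] at hmem1 hor
        have hjk : ∀ k, j = some k → k ≠ i ∧ ξ k + 1 ≤ ζ k := by
          intro k hjk
          have hki : k ≠ i := by rintro rfl; exact hjne hjk
          have h := hj k hjk
          rw [Pi.add_apply, unitv_apply_ne hki] at h
          exact ⟨hki, by omega⟩
        set ζ' := ζ + chi (some i) - chi j with hζ'def
        have hchinn : ∀ m, 0 ≤ chi j m := by
          intro m
          cases j with
          | none => rw [chi_none_apply]
          | some k => rw [chi_some_apply]; split <;> omega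
        have hζ'app : ∀ m, ζ' m = ζ m + unitv i m - chi j m := by
          intro m; rw [hζ'def]; rfl
        have hζ'b : ζ' ≤ b := by
          rw [Pi.le_def]
          intro m
          have hc := hchinn m
          have h2 : ζ m ≤ b m := Pi.le_def.mp hζb m
          rw [hζ'app m]
          by_cases hm : m = i
          · subst hm
            have h1 : ξ m + 1 ≤ b m := by
              have h3 := Pi.le_def.mp hleb m
              rw [Pi.add_apply, unitv_apply_self] at h3
              omega
            rw [unitv_apply_self]
            omega
          · rw [unitv_apply_ne hm]
            omega
        have hζ'ge : ξ + unitv i ≤ ζ' := by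
          rw [Pi.le_def]
          intro m
          rw [hζ'app m, Pi.add_apply]
          by_cases hm : m = i
          · subst hm
            have hchij : chi j m = 0 := by
              cases j with
              | none => rw [chi_none_apply]
              | some k =>
                have hki : k ≠ m := (hjk k rfl).1
                rw [chi_some_apply, if_neg (Ne.symm hki)]
            rw [unitv_apply_self, hchij]
            omega
          · have hle2 : ξ m + chi j m ≤ ζ m := by
              cases j with
              | none => rw [chi_none_apply]; have := Pi.le_def.mp hξζ m; omega
              | some k =>
                by_cases hkm : m = k
                · subst hkm
                  have := (hjk m rfl).2
                  rw [chi_some_apply, if_pos rfl]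
                  omega
                · rw [chi_some_apply, if_neg hkm]
                  have := Pi.le_def.mp hξζ m; omega
            rw [unitv_apply_ne hm]
            omega
        rcases hor with h1 | h2 | h3
        · exfalso
          cases j with
          | none =>
            rw [chi_none_eq, add_zero] at h1
            exact absurd hinc (not_le.mpr h1)
          | some k =>
            have hki := (hjk k rfl).1
            have hkζ := (hjk k rfl).2
            rw [chi_some_eq] at h1 hmem1
            have hkb : ξ + unitv k ≤ b := by
              rw [Pi.le_def]
              intro m
              rw [Pi.add_apply]
              have h2 : ζ m ≤ b m := Pi.le_def.mp hζb m
              by_cases hmk : m = k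
              · subst hmk; rw [unitv_apply_self]; omega
              · rw [unitv_apply_ne hmk]
                have := Pi.le_def.mp hξζ m; omega
            exact absurd (hmax k hmem1 hkb) (not_le.mpr h1)
        · exact absurd (hζopt ζ' hmem2 hζ'b) (not_le.mpr h2)
        · refine ⟨ζ', hmem2, hζ'b, ?_, hζ'ge⟩
          intro η hη hηb
          calc f η ≤ f ζ := hζopt η hη hηb
            _ = f ζ' := h3.1.symm
  obtain ⟨hξΞ, hξb, ζ, hζΞ, hζb, hζopt, hξζ⟩ := key ξ hreach
  have claim : ∀ ζ' ∈ Ξ, ζ' ≤ b → (∀ η ∈ Ξ, η ≤ b → f η ≤ f ζ') → ξ ≤ ζ' → ζ' = ξ := by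
    intro ζ' hζ'Ξ hζ'b hζ'opt hξζ'
    by_contra hne
    have hex : ∃ i, ξ i < ζ' i := by
      by_contra hno
      push_neg at hno
      exact hne (funext fun i => le_antisymm (hno i) (Pi.le_def.mp hξζ' i))
    obtain ⟨i, hi⟩ := hex
    obtain ⟨j, hj, hmem1, hmem2, hor⟩ := hf ζ' hζ'Ξ ξ hξΞ i hi
    have hjnone : j = none := by
      cases j with
      | none => rfl
      | some k => exact absurd (Pi.le_def.mp hξζ' k) (not_le.mpr (hj k rfl))
    subst hjnone
    simp only [chi_none_eq, add_zero, sub_zero, chi_some_eq] at hmem1 hmem2 hor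
    have hξib : ξ + unitv i ≤ b := by
      rw [Pi.le_def]
      intro m
      rw [Pi.add_apply]
      have h2 : ζ' m ≤ b m := Pi.le_def.mp hζ'b m
      by_cases hm : m = i
      · subst hm; rw [unitv_apply_self]; omega
      · rw [unitv_apply_ne hm]
        have := Pi.le_def.mp hξζ' m; omega
    rcases hor with h1 | h2 | h3
    · have hsb : ζ' - unitv i ≤ b := by
        rw [Pi.le_def]
        intro m
        rw [Pi.sub_apply]
        have h2 : ζ' m ≤ b m := Pi.le_def.mp hζ'b m
        by_cases hm : m = i
        · subst hm; rw [unitv_apply_self]; omega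
        · rw [unitv_apply_ne hm]; omega
      exact absurd (hζ'opt _ hmem1 hsb) (not_le.mpr h1)
    · exact absurd (hterm i hmem2 hξib) (not_lt.mpr (le_of_lt h2))
    · exact absurd (hterm i hmem2 hξib) (not_lt.mpr h3.1.symm.le)
  have hζeq : ζ = ξ := claim ζ hζΞ hζb hζopt hξζ
  refine ⟨hξΞ, hξb, ?_, claim⟩
  intro η hη hηb
  calc f η ≤ f ζ := hζopt η hη hηb
    _ = f ξ := by rw [hζeq]
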